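/- Let F be a finite field of characteristic 2 with |F| = q, and let K be a quadratic extension field of F. Then for every divisor d of q + 1 with d > 2, there exist a ∈ F with tr(a) = 1 and λ ∈ K with λ² + λ + a = 0 such that λ^q/λ has multiplicative order exactly d in K^×. -/
import Mathlib


/-- The absolute trace `tr(x) = x + x² + x⁴ + ⋯ + x^{2^{k-1}}` of a finite field
of order `2^k`, taking values in the prime subfield `{0, 1} ⊆ F`. -/
def fieldTr {F : Type*} [Field F] (k : ℕ) (x : F) : F :=
  ∑ i ∈ Finset.range k, x ^ (2 ^ i)

theorem exists_trace_one_with_order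
    {F K : Type*} [Field F] [Fintype F] [CharP F 2] [Field K] [Fintype K]
    [Algebra F K] (k : ℕ) (hcard : Fintype.card F = 2 ^ k)
    (hK : Fintype.card K = Fintype.card F ^ 2) :
    ∀ d : ℕ, d ∣ Fintype.card F + 1 → 2 < d →
      ∃ a : F, fieldTr k a = 1 ∧
        ∃ lam : K, lam ^ 2 + lam + algebraMap F K a = 0 ∧
          orderOf (lam ^ Fintype.card F / lam) = d := by
  classical
  intro d hdvd hd2
  set q := Fintype.card F with hq
  have hq2 : 2 ≤ q := Fintype.one_lt_card
  have hinj : Function.Injective (algebraMap F K) := (algebraMap F K).injective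
  have hcharK : CharP K 2 := charP_of_injective_algebraMap hinj 2
  have h2 : (2 : K) = 0 := CharTwo.two_eq_zero
  -- the unit group of K
  have hKu : Nat.card Kˣ = q ^ 2 - 1 := by
    rw [Nat.card_eq_fintype_card, Fintype.card_units, hK]
  have hdvdN : d ∣ Nat.card Kˣ := by
    have e : q ^ 2 - 1 = (q + 1) * (q - 1) := by simpa using Nat.sq_sub_sq q 1
    rw [hKu, e]
    exact Dvd.dvd.mul_right hdvd _
  have hN0 : Nat.card Kˣ ≠ 0 := by
    have : 4 ≤ q ^ 2 := by nlinarith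
    rw [hKu]; omega
  have hd0 : d ≠ 0 := by omega
  obtain ⟨g, hg⟩ := IsCyclic.exists_ofOrder_eq_natCard (α := Kˣ)
  set μu : Kˣ := g ^ (Nat.card Kˣ / d) with hμu
  have hordu : orderOf μu = d := by
    rw [hμu, orderOf_pow, hg,
      Nat.gcd_eq_right (Nat.div_dvd_of_dvd hdvdN), Nat.div_div_self hdvdN hN0]
  set μ : K := (μu : K) with hμdef
  have hord : orderOf μ = d := by rw [hμdef, orderOf_units, hordu]
  have hμ0 : μ ≠ 0 := Units.ne_zero μu
  have hμ1 : μ ≠ 1 := by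
    intro h
    rw [h, orderOf_one] at hord
    omega
  have hs : μ + 1 ≠ 0 := by
    intro h
    exact hμ1 (by linear_combination h - h2)
  set lam : K := (μ + 1)⁻¹ with hlamdef
  have hlam0 : lam ≠ 0 := inv_ne_zero hs
  have h1 : lam * (μ + 1) = 1 := inv_mul_cancel₀ hs
  have hμq1 : μ ^ (q + 1) = 1 := orderOf_dvd_iff_pow_eq_one.mp (hord ▸ hdvd)
  have hμq' : μ ^ q * μ = 1 := by rw [← pow_succ, hμq1]
  have hml : μ * lam = lam + 1 := by linear_combination h1 - lam * h2
  -- lam ^ q = μ * lam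
  have e1 : lam ^ q * (μ ^ q + 1) = 1 := by
    have := congrArg (· ^ q) h1
    simp only [mul_pow, one_pow] at this
    rwa [hcard, add_pow_char_pow, one_pow, ← hcard] at this
  have hlamq : lam ^ q = μ * lam := by
    apply mul_right_cancel₀ hs
    calc lam ^ q * (μ + 1) = lam ^ q * ((μ ^ q + 1) * μ) := by
          rw [add_mul, one_mul, hμq', add_comm]
      _ = μ := by rw [← mul_assoc, e1, one_mul]
      _ = μ * lam * (μ + 1) := by rw [mul_assoc, h1, mul_one]
  set b : K := lam ^ 2 + lam with hbdef
  have hbq : b ^ q = b := by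
    have hb1 : b ^ q = (lam ^ q) ^ 2 + lam ^ q := by
      rw [hbdef, hcard, add_pow_char_pow, ← pow_mul, ← pow_mul, mul_comm]
    rw [hb1, hlamq, hml, hbdef]
    linear_combination (lam + 1) * h2
  -- b lies in the image of F
  have hmem : ∃ a' : F, algebraMap F K a' = b := by
    set p : Polynomial K := Polynomial.X ^ q - Polynomial.X with hp
    have hp0 : p ≠ 0 := by
      intro h
      have := congrArg (Polynomial.coeff · q) h
      rw [hp] at this
      simp only [Polynomial.coeff_sub, Polynomial.coeff_X_pow, Polynomial.coeff_X,
        Polynomial.coeff_zero, if_pos rfl, if_neg (show ¬(1 = q) by omega)] at this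
      simp at this
    set s : Finset K := Finset.univ.image (algebraMap F K) with hsdef
    set t : Finset K := p.roots.toFinset with htdef
    have hscard : s.card = q := by
      rw [hsdef, Finset.card_image_of_injective _ hinj, Finset.card_univ]
    have htcard : t.card ≤ q := by
      refine le_trans (Multiset.toFinset_card_le _) (le_trans (Polynomial.card_roots' p) ?_)
      refine le_trans (Polynomial.natDegree_sub_le _ _) ?_
      simp [Polynomial.natDegree_X_pow]
      omega
    have hsub : s ⊆ t := by
      intro x hx
      rw [hsdef, Finset.mem_image] at hx
      obtain ⟨y, _, rfl⟩ := hx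
      rw [htdef, Multiset.mem_toFinset, Polynomial.mem_roots hp0]
      simp only [hp, Polynomial.IsRoot, Polynomial.eval_sub, Polynomial.eval_pow,
        Polynomial.eval_X]
      rw [← map_pow, hq, FiniteField.pow_card, sub_self]
    have hst : s = t := Finset.eq_of_subset_of_card_le hsub (by omega)
    have hbt : b ∈ t := by
      rw [htdef, Multiset.mem_toFinset, Polynomial.mem_roots hp0]
      simp only [hp, Polynomial.IsRoot, Polynomial.eval_sub, Polynomial.eval_pow,
        Polynomial.eval_X]
      rw [hbq, sub_self]
    rw [← hst, hsdef, Finset.mem_image] at hbt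
    obtain ⟨a', _, ha'⟩ := hbt
    exact ⟨a', ha'⟩
  obtain ⟨a', ha'⟩ := hmem
  refine ⟨a', ?_, lam, ?_, ?_⟩
  · -- trace
    apply hinj
    rw [map_one]
    have hmap : algebraMap F K (fieldTr k a') = ∑ i ∈ Finset.range k, b ^ 2 ^ i := by
      rw [fieldTr, map_sum]
      exact Finset.sum_congr rfl fun i _ => by rw [map_pow, ha']
    have hterm : ∀ i, b ^ 2 ^ i = lam ^ 2 ^ (i + 1) - lam ^ 2 ^ i := by
      intro i
      rw [hbdef, add_pow_char_pow, ← pow_mul, CharTwo.sub_eq_add, pow_succ, mul_comm (2 ^ i) 2]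
    rw [hmap, Finset.sum_congr rfl fun i _ => hterm i,
      Finset.sum_range_sub (fun i => lam ^ 2 ^ i), CharTwo.sub_eq_add, pow_zero, pow_one,
      ← hcard, hlamq, hml]
    linear_combination lam * h2
  · rw [ha', hbdef, CharTwo.add_self_eq_zero]
  · rw [hlamq, mul_div_assoc, div_self hlam0, mul_one, hord]
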